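/- Let x_c := −(9/2)^{2/3} and let Σ_S ⊂ ℂ be the union of the three closed straight-line segments joining the origin to the three points x_c, x_c·e^{2πi/3}, and x_c·e^{−2πi/3}. Then there exists a unique function S, analytic on the open set ℂ ∖ Σ_S, such that 3·S(x)³ + 4·x·S(x) + 8 = 0 for all x ∈ ℂ ∖ Σ_S and S(x) → 0 as x → ∞. Moreover this function satisfies the sharper asymptotic condition S(x) = −2/x + O(|x|⁻⁴) as x → ∞. -/

import Mathlib

open Filter Asymptotics

/-- The corner point `x_c := −(9/2)^{2/3}` of the elliptic region. -/
noncomputable def xCorner : ℂ := -((((9 : ℝ) / 2) ^ ((2 : ℝ) / 3) : ℝ) : ℂ)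

/-- The contour `Σ_S`: the union of the three closed straight-line segments joining the
origin to the three branch points `x_c`, `x_c e^{2πi/3}`, `x_c e^{−2πi/3}` of the cubic
`3S³ + 4xS + 8 = 0`. -/
noncomputable def SigmaS : Set ℂ :=
  segment ℝ (0 : ℂ) xCorner ∪
    segment ℝ (0 : ℂ) (xCorner * Complex.exp (2 * Real.pi * Complex.I / 3)) ∪
    segment ℝ (0 : ℂ) (xCorner * Complex.exp (-(2 * Real.pi * Complex.I) / 3))

section Aux
open Complex

noncomputable def rhoC (z : ℂ) : ℂ := (1 + z ^ 2) ^ ((1 : ℂ)/2)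
noncomputable def cC (z : ℂ) : ℂ := (z + rhoC z) ^ ((1 : ℂ)/3)
noncomputable def dC (ζ : ℂ) : ℂ := cC (9/2 * ζ) - (cC (9/2 * ζ))⁻¹
noncomputable def FC (ζ : ℂ) : ℂ := dC ζ / (3 * ζ)
noncomputable def zetaC (x : ℂ) : ℂ := x⁻¹ * x⁻¹ ^ ((1 : ℂ)/2)
noncomputable def SC (x : ℂ) : ℂ := -2 * FC (zetaC x) / x

section algebra
variable {z : ℂ} (hz : (1 + z ^ 2) ∈ slitPlane)

lemma sq_half_cpow {w : ℂ} (hw : w ≠ 0) : (w ^ ((1:ℂ)/2)) ^ 2 = w := by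
  rw [sq, ← Complex.cpow_add _ _ hw]
  norm_num

include hz

lemma rho_sq : rhoC z ^ 2 = 1 + z ^ 2 := sq_half_cpow (slitPlane_ne_zero hz)

lemma rho_re_pos : 0 < (rhoC z).re := by
  have hw : (1 + z ^ 2) ≠ 0 := slitPlane_ne_zero hz
  rw [rhoC, Complex.cpow_def_of_ne_zero hw]
  rw [Complex.exp_re]
  have him : (Complex.log (1 + z ^ 2) * ((1:ℂ)/2)).im = (1 + z^2).arg / 2 := by
    simp [Complex.mul_im, Complex.log_im]
    ring
  rw [him]
  have h1 : -Real.pi < (1 + z^2).arg := Complex.neg_pi_lt_arg _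
  have h2 : (1 + z^2).arg < Real.pi :=
    lt_of_le_of_ne (Complex.arg_le_pi _) (slitPlane_arg_ne_pi hz)
  have hpi : (0:ℝ) < Real.pi := Real.pi_pos
  have : 0 < Real.cos ((1 + z^2).arg / 2) := by
    apply Real.cos_pos_of_mem_Ioo
    constructor <;> [linarith; linarith]
  positivity

lemma key_A : (z + rhoC z) * (rhoC z - z) = 1 := by
  have := rho_sq hz
  linear_combination this

lemma A_ne : z + rhoC z ≠ 0 := left_ne_zero_of_mul_eq_one (key_A hz)

lemma A_inv : (z + rhoC z)⁻¹ = rhoC z - z :=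
  (eq_inv_of_mul_eq_one_left (by linear_combination key_A hz)).symm

lemma A_slit : (z + rhoC z) ∈ slitPlane := by
  by_contra h
  rw [Complex.mem_slitPlane_iff_not_le_zero, not_not] at h
  set A := z + rhoC z with hA
  have hAne : A ≠ 0 := A_ne hz
  have him : A.im = 0 := by
    rcases le_def.mp h with ⟨-, h2⟩
    simpa using h2
  have hre : A.re < 0 := by
    rcases le_def.mp h with ⟨h1, -⟩
    have : A.re ≤ 0 := by simpa using h1
    rcases this.lt_or_eq with h' | h'
    · exact h'
    · exact absurd (Complex.ext h' him) hAne
  have hAeq : A = ((A.re : ℝ) : ℂ) := Complex.ext rfl him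
  have h2rho : 2 * rhoC z = A + A⁻¹ := by
    rw [hA, A_inv hz]; ring
  have : 2 * (rhoC z).re = A.re + (A.re)⁻¹ := by
    have : (2 * rhoC z).re = (A + A⁻¹).re := by rw [h2rho]
    rw [hAeq] at this
    push_cast at this
    simpa using this
  have hinv : (A.re)⁻¹ < 0 := inv_lt_zero.mpr hre
  have := rho_re_pos hz
  linarith

lemma c_ne : cC z ≠ 0 := by
  rw [cC]
  simp [Complex.cpow_eq_zero_iff, A_ne hz]

lemma c_cube : cC z ^ 3 = z + rhoC z := by
  rw [cC]
  have h := A_ne hz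
  rw [show (3:ℕ) = 2 + 1 by norm_num, pow_succ, sq, ← Complex.cpow_add _ _ h,
    ← Complex.cpow_add _ _ h]
  norm_num

lemma c_inv_cube : (cC z)⁻¹ ^ 3 = rhoC z - z := by
  rw [inv_pow, c_cube hz, A_inv hz]

lemma d_cubic_z : (cC z - (cC z)⁻¹) ^ 3 + 3 * (cC z - (cC z)⁻¹) = 2 * z := by
  have h1 := c_cube hz
  have h2 := c_inv_cube hz
  have hc : cC z * (cC z)⁻¹ = 1 := mul_inv_cancel₀ (c_ne hz)
  linear_combination h1 - h2 - (3 * (cC z - (cC z)⁻¹)) * hc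

end algebra

lemma d_cubic {ζ : ℂ} (hz : (1 + (9/2 * ζ) ^ 2) ∈ slitPlane) :
    dC ζ ^ 3 + 3 * dC ζ = 9 * ζ := by
  have := d_cubic_z hz
  rw [dC]
  linear_combination this

lemma F_cubic {ζ : ℂ} (hζ : ζ ≠ 0) (hz : (1 + (9/2 * ζ) ^ 2) ∈ slitPlane) :
    3 * ζ ^ 2 * FC ζ ^ 3 + FC ζ = 1 := by
  have hd := d_cubic hz
  rw [FC]
  field_simp
  linear_combination hd

lemma F_even {ζ : ℂ} (hz : (1 + (9/2 * ζ) ^ 2) ∈ slitPlane) : FC (-ζ) = FC ζ := by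
  have hrho : rhoC (9/2 * -ζ) = rhoC (9/2 * ζ) := by
    rw [rhoC, rhoC, show (1 + (9/2 * -ζ)^2 : ℂ) = (1 + (9/2*ζ)^2) by ring]
  have hAinv : (9/2 * -ζ) + rhoC (9/2 * -ζ) = ((9/2 * ζ) + rhoC (9/2 * ζ))⁻¹ := by
    rw [hrho, A_inv hz]; ring
  have hc : cC (9/2 * -ζ) = (cC (9/2 * ζ))⁻¹ := by
    rw [cC, cC, hAinv, Complex.inv_cpow]
    exact slitPlane_arg_ne_pi (A_slit hz)
  have hd : dC (-ζ) = -dC ζ := by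
    rw [dC, dC, hc, inv_inv]
    ring
  rw [FC, FC, hd]
  rw [show (3:ℂ) * -ζ = -(3*ζ) by ring, neg_div_neg_eq]



noncomputable def mR : ℝ := ((9 : ℝ) / 2) ^ ((2 : ℝ) / 3)

lemma xCorner_eq : xCorner = -(mR : ℂ) := rfl

lemma mR_pos : 0 < mR := Real.rpow_pos_of_pos (by norm_num) _

lemma mR_cube : mR ^ (3 : ℕ) = 81 / 4 := by
  have h : mR ^ (3 : ℕ) = ((9:ℝ)/2) ^ (((2:ℝ)/3) * (3:ℕ)) := by
    rw [Real.rpow_mul (by norm_num), mR, Real.rpow_natCast]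
  rw [h, show (((2:ℝ)/3) * (3:ℕ) : ℝ) = ((2:ℕ):ℝ) by push_cast; ring, Real.rpow_natCast]
  norm_num

lemma exp_2pi3 : Complex.exp (2 * ↑Real.pi * Complex.I / 3)
    = (-(1/2) : ℂ) + ((Real.sqrt 3 / 2 : ℝ) : ℂ) * Complex.I := by
  have h : (2 * ↑Real.pi * Complex.I / 3 : ℂ) = ((2 * Real.pi / 3 : ℝ) : ℂ) * Complex.I := by
    push_cast; ring
  rw [h, Complex.exp_mul_I, ← Complex.ofReal_cos, ← Complex.ofReal_sin]
  rw [show (2 * Real.pi / 3 : ℝ) = Real.pi - Real.pi / 3 by ring,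
    Real.cos_pi_sub, Real.sin_pi_sub, Real.cos_pi_div_three, Real.sin_pi_div_three]
  push_cast; ring

lemma exp_neg2pi3 : Complex.exp (-(2 * ↑Real.pi * Complex.I) / 3)
    = (-(1/2) : ℂ) - ((Real.sqrt 3 / 2 : ℝ) : ℂ) * Complex.I := by
  have h : (-(2 * ↑Real.pi * Complex.I) / 3 : ℂ) = ((-(2 * Real.pi / 3) : ℝ) : ℂ) * Complex.I := by
    push_cast; ring
  rw [h, Complex.exp_mul_I, ← Complex.ofReal_cos, ← Complex.ofReal_sin, Real.cos_neg, Real.sin_neg]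
  rw [show (2 * Real.pi / 3 : ℝ) = Real.pi - Real.pi / 3 by ring,
    Real.cos_pi_sub, Real.sin_pi_sub, Real.cos_pi_div_three, Real.sin_pi_div_three]
  push_cast; ring

lemma mem_seg0 {e y : ℂ} (b : ℝ) (hb0 : 0 ≤ b) (hb1 : b ≤ 1) (hy : y = (b : ℂ) * e) :
    y ∈ segment ℝ (0 : ℂ) e :=
  ⟨1 - b, b, by linarith, hb0, by ring, by rw [smul_zero, zero_add, hy, Complex.real_smul]⟩

lemma zero_mem_SigmaS : (0 : ℂ) ∈ SigmaS :=
  Or.inl (Or.inl (left_mem_segment ℝ _ _))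

lemma cube_mem_SigmaS {x : ℂ} {s : ℝ} (hx3 : x ^ 3 = (s : ℂ))
    (hs1 : -(81/4) ≤ s) (hs2 : s < 0) : x ∈ SigmaS := by
  have hx0 : x ≠ 0 := by
    rintro rfl
    rw [show ((0:ℂ)^3) = 0 by ring] at hx3
    exact absurd (Complex.ofReal_eq_zero.mp hx3.symm) (ne_of_lt hs2)
  set t : ℝ := ‖x‖ with ht
  have ht0 : 0 < t := norm_pos_iff.mpr hx0
  have ht3 : t ^ 3 = -s := by
    rw [ht, ← norm_pow, hx3, Complex.norm_real, Real.norm_eq_abs, abs_of_neg hs2]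
  have htm : t ≤ mR := by
    have h1 : t ^ 3 ≤ mR ^ 3 := by rw [ht3, mR_cube]; linarith
    exact le_of_pow_le_pow_left₀ (by norm_num) (le_of_lt mR_pos) h1
  set u : ℂ := x / (t : ℂ) with hu
  have htC : (t : ℂ) ≠ 0 := by exact_mod_cast ne_of_gt ht0
  have hxu : x = (t : ℂ) * u := by rw [hu]; field_simp
  have hu3 : u ^ 3 = -1 := by
    rw [hu, div_pow, hx3, show ((t:ℂ))^3 = ((t^3 : ℝ) : ℂ) by push_cast; ring, ht3]
    have hsne : (s:ℂ) ≠ 0 := by exact_mod_cast ne_of_lt hs2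
    push_cast
    rw [div_neg, div_self hsne]
  have hfac : (u + 1) * (u ^ 2 - u + 1) = 0 := by linear_combination hu3
  have hb0 : 0 ≤ t / mR := le_of_lt (div_pos ht0 mR_pos)
  have hb1 : t / mR ≤ 1 := (div_le_one mR_pos).mpr htm
  have hmC : (mR:ℂ) ≠ 0 := by exact_mod_cast ne_of_gt mR_pos
  rcases mul_eq_zero.mp hfac with h1 | h2
  · -- u = -1
    have hu1 : u = -1 := by linear_combination h1
    refine Or.inl (Or.inl (mem_seg0 (t / mR) hb0 hb1 ?_))
    rw [hxu, hu1, xCorner_eq]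
    push_cast
    field_simp
  · -- u^2 - u + 1 = 0
    have huabs : ‖u‖ = 1 := by
      rw [hu, norm_div, Complex.norm_real, Real.norm_eq_abs, abs_of_pos ht0, ← ht, div_self (ne_of_gt ht0)]
    have hune : u ≠ 0 := by
      intro h; rw [h] at huabs; simp at huabs
    have hinv : u⁻¹ = starRingEnd ℂ u := Complex.inv_eq_conj huabs
    have hsum : u + starRingEnd ℂ u = 1 := by
      rw [← hinv]
      field_simp
      linear_combination h2
    have hre : u.re = 1/2 := by
      have h := congrArg Complex.re hsum
      simp [Complex.add_re, Complex.conj_re] at h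
      linarith
    have hnsq : u.re ^ 2 + u.im ^ 2 = 1 := by
      have h := Complex.sq_norm u
      rw [huabs, Complex.normSq_apply] at h
      nlinarith [h]
    have him2 : u.im ^ 2 = 3/4 := by rw [hre] at hnsq; nlinarith
    have h3 : Real.sqrt 3 ^ 2 = 3 := Real.sq_sqrt (by norm_num)
    have hcase : (u.im - Real.sqrt 3 / 2) * (u.im + Real.sqrt 3 / 2) = 0 := by
      linear_combination him2 - (1/4) * h3
    rcases mul_eq_zero.mp hcase with him | him
    · -- u.im = √3/2, endpoint with exp(-2πi/3)
      have himv : u.im = Real.sqrt 3 / 2 := by linarith [sub_eq_zero.mp him]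
      refine Or.inr (mem_seg0 (t / mR) hb0 hb1 ?_)
      rw [hxu, xCorner_eq, exp_neg2pi3]
      have huval : u = (1/2 : ℂ) + ((Real.sqrt 3 / 2 : ℝ) : ℂ) * Complex.I := by
        apply Complex.ext <;> simp [hre, himv]
      rw [huval]
      push_cast
      field_simp
      ring
    · have himv : u.im = -(Real.sqrt 3 / 2) := by linarith [eq_neg_of_add_eq_zero_left him]
      refine Or.inl (Or.inr (mem_seg0 (t / mR) hb0 hb1 ?_))
      rw [hxu, xCorner_eq, exp_2pi3]
      have huval : u = (1/2 : ℂ) - ((Real.sqrt 3 / 2 : ℝ) : ℂ) * Complex.I := by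
        apply Complex.ext <;> simp [hre, himv]
      rw [huval]
      push_cast
      field_simp
      ring

lemma slit_of_not_mem {x : ℂ} (hx : x ∉ SigmaS) :
    (1 + (81/4 : ℂ) * x⁻¹ ^ 3) ∈ slitPlane := by
  have hx0 : x ≠ 0 := by rintro rfl; exact hx zero_mem_SigmaS
  by_contra h
  rw [Complex.mem_slitPlane_iff_not_le_zero, not_not] at h
  obtain ⟨h1, h2⟩ := Complex.le_def.mp h
  set v : ℂ := x⁻¹ ^ 3 with hv
  have hvim : v.im = 0 := by
    have : (1 + (81/4 : ℂ) * v).im = 0 := by simpa using h2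
    simpa [Complex.add_im, Complex.mul_im] using this
  have hvre : v.re ≤ -(4/81) := by
    have : (1 + (81/4 : ℂ) * v).re ≤ 0 := by simpa using h1
    rw [Complex.add_re, Complex.mul_re, hvim] at this
    simp at this
    nlinarith
  have hvne : v.re < 0 := lt_of_le_of_lt hvre (by norm_num)
  have hveq : v = ((v.re : ℝ) : ℂ) := Complex.ext rfl hvim
  have hx3 : x ^ 3 = (((v.re)⁻¹ : ℝ) : ℂ) := by
    have hxv : x ^ 3 * v = 1 := by
      rw [hv]; field_simp
    rw [hveq] at hxv
    push_cast
    rw [inv_eq_one_div, eq_div_iff (by exact_mod_cast ne_of_lt hvne : ((v.re:ℝ):ℂ) ≠ 0)]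
    exact hxv
  have hmul : v.re * (v.re)⁻¹ = 1 := mul_inv_cancel₀ (ne_of_lt hvne)
  have hs2 : (v.re)⁻¹ < 0 := inv_lt_zero.mpr hvne
  have hs1 : -(81/4) ≤ (v.re)⁻¹ := by nlinarith
  exact hx (cube_mem_SigmaS hx3 hs1 hs2)


-- ## zeta lemmas
lemma zeta_ne {x : ℂ} (hx : x ≠ 0) : zetaC x ≠ 0 := by
  rw [zetaC]
  exact mul_ne_zero (inv_ne_zero hx)
    (by simp [Complex.cpow_eq_zero_iff, inv_ne_zero hx])

lemma zeta_sq {x : ℂ} (hx : x ≠ 0) : zetaC x ^ 2 = x⁻¹ ^ 3 := by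
  rw [zetaC, mul_pow, sq_half_cpow (inv_ne_zero hx)]
  ring

lemma not_mem_ne_zero {x : ℂ} (hx : x ∉ SigmaS) : x ≠ 0 := by
  rintro rfl; exact hx zero_mem_SigmaS

lemma slit_zeta {x : ℂ} (hx : x ∉ SigmaS) : (1 + (9/2 * zetaC x) ^ 2) ∈ Complex.slitPlane := by
  have hx0 : x ≠ 0 := not_mem_ne_zero hx
  have h := slit_of_not_mem hx
  rw [show (1 + (9/2 * zetaC x)^2 : ℂ) = 1 + 81/4 * (zetaC x ^ 2) by ring, zeta_sq hx0]
  exact h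

-- ## differentiability
lemma F_diff {ζ : ℂ} (hζ : ζ ≠ 0) (hz : (1 + (9/2 * ζ) ^ 2) ∈ Complex.slitPlane) :
    DifferentiableAt ℂ FC ζ := by
  have hpoly : DifferentiableAt ℂ (fun ζ : ℂ => 1 + (9/2 * ζ) ^ 2) ζ := by fun_prop
  have hrho : DifferentiableAt ℂ (fun ζ : ℂ => rhoC (9/2 * ζ)) ζ := by
    simp only [rhoC]
    exact hpoly.cpow (differentiableAt_const _) hz
  have hA : DifferentiableAt ℂ (fun ζ : ℂ => 9/2 * ζ + rhoC (9/2 * ζ)) ζ :=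
    (differentiableAt_id.const_mul _).add hrho
  have hAslit : (9/2 * ζ + rhoC (9/2 * ζ)) ∈ Complex.slitPlane := A_slit hz
  have hc : DifferentiableAt ℂ (fun ζ : ℂ => cC (9/2 * ζ)) ζ := by
    simp only [cC]
    exact hA.cpow (differentiableAt_const _) hAslit
  have hcne : cC (9/2 * ζ) ≠ 0 := c_ne hz
  have hd : DifferentiableAt ℂ dC ζ := by
    have := hc.sub (hc.inv hcne)
    exact this
  have h3ζ : (3 * ζ : ℂ) ≠ 0 := by simp [hζ]
  have := hd.div ((differentiableAt_id).const_mul (3:ℂ)) h3ζ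
  exact this

lemma zetaN_facts {x : ℂ} (hx0 : x ≠ 0) :
    (Complex.I * (-x)⁻¹ * (-x)⁻¹ ^ ((1:ℂ)/2)) ^ 2 = x⁻¹ ^ 3 ∧
      (Complex.I * (-x)⁻¹ * (-x)⁻¹ ^ ((1:ℂ)/2)) ≠ 0 := by
  have hnx : (-x : ℂ) ≠ 0 := neg_ne_zero.mpr hx0
  constructor
  · rw [mul_pow, mul_pow, sq_half_cpow (inv_ne_zero hnx), Complex.I_sq]
    rw [show (-x : ℂ)⁻¹ = -(x⁻¹) by field_simp]
    ring
  · exact mul_ne_zero (mul_ne_zero Complex.I_ne_zero (inv_ne_zero hnx))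
      (by simp [Complex.cpow_eq_zero_iff, inv_ne_zero hnx, hx0])

lemma SigmaS_subset : SigmaS ⊆ Metric.closedBall (0:ℂ) mR := by
  have hconv : Convex ℝ (Metric.closedBall (0:ℂ) mR) := convex_closedBall _ _
  have h0 : (0:ℂ) ∈ Metric.closedBall (0:ℂ) mR := by
    simp [le_of_lt mR_pos]
  have habs : ∀ θ : ℂ, ‖Complex.exp θ‖ = 1 → xCorner * Complex.exp θ ∈ Metric.closedBall (0:ℂ) mR := by
    intro θ hθ
    simp only [Metric.mem_closedBall, dist_zero_right, norm_mul, hθ]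
    rw [xCorner_eq]
    simp [abs_of_pos mR_pos]
  have h1 : xCorner ∈ Metric.closedBall (0:ℂ) mR := by
    rw [xCorner_eq]
    simp [abs_of_pos mR_pos]
  have he1 : ‖Complex.exp (2 * ↑Real.pi * Complex.I / 3)‖ = 1 := by
    rw [Complex.norm_exp]
    norm_num [show (2 * ↑Real.pi * Complex.I / 3 : ℂ).re = 0 by simp [Complex.div_re]]
  have he2 : ‖Complex.exp (-(2 * ↑Real.pi * Complex.I) / 3)‖ = 1 := by
    rw [Complex.norm_exp]
    norm_num [show (-(2 * ↑Real.pi * Complex.I) / 3 : ℂ).re = 0 by simp [Complex.div_re]]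
  rintro y ((h | h) | h)
  · exact hconv.segment_subset h0 h1 h
  · exact hconv.segment_subset h0 (habs _ he1) h
  · exact hconv.segment_subset h0 (habs _ he2) h

lemma not_mem_of_norm_gt {x : ℂ} (h : mR < ‖x‖) : x ∉ SigmaS := by
  intro hx
  have := SigmaS_subset hx
  simp only [Metric.mem_closedBall, dist_zero_right] at this
  linarith

lemma SigmaS_compact : IsCompact SigmaS := by
  have h : ∀ e : ℂ, IsCompact (segment ℝ (0:ℂ) e) := by
    intro e
    rw [segment_eq_image]
    exact isCompact_Icc.image (by continuity)
  exact ((h _).union (h _)).union (h _)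

lemma isOpen_complS : IsOpen SigmaSᶜ := SigmaS_compact.isClosed.isOpen_compl

lemma S_diff {x : ℂ} (hx : x ∉ SigmaS) : DifferentiableAt ℂ SC x := by
  have hx0 : x ≠ 0 := not_mem_ne_zero hx
  by_cases h : x⁻¹ ∈ Complex.slitPlane
  · have hzd : DifferentiableAt ℂ zetaC x := by
      have := (differentiableAt_id.inv hx0).mul
        ((differentiableAt_id.inv hx0).cpow (differentiableAt_const ((1:ℂ)/2)) h)
      exact this
    have hFd : DifferentiableAt ℂ (fun y => FC (zetaC y)) x :=
      (F_diff (zeta_ne hx0) (slit_zeta hx)).comp x hzd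
    have := ((differentiableAt_const (-2:ℂ)).mul hFd).div differentiableAt_id hx0
    exact this
  · -- x is a negative real; use the other square-root branch
    set zN : ℂ → ℂ := fun y => Complex.I * (-y)⁻¹ * (-y)⁻¹ ^ ((1:ℂ)/2) with hzN
    have hnslit : (-x)⁻¹ ∈ Complex.slitPlane := by
      rw [Complex.mem_slitPlane_iff_not_le_zero, not_not] at h
      obtain ⟨h1, h2⟩ := Complex.le_def.mp h
      have him : (x⁻¹).im = 0 := by simpa using h2
      have hre : (x⁻¹).re ≤ 0 := by simpa using h1
      have hrene : (x⁻¹).re < 0 := by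
        rcases hre.lt_or_eq with h' | h'
        · exact h'
        · exact absurd (Complex.ext h' him) (inv_ne_zero hx0)
      rw [Complex.mem_slitPlane_iff]
      left
      rw [show (-x : ℂ)⁻¹ = -(x⁻¹) by field_simp]
      simpa using hrene
    have hnx0 : (-x : ℂ) ≠ 0 := neg_ne_zero.mpr hx0
    have hzNd : DifferentiableAt ℂ zN x := by
      rw [hzN]
      have hd1 : DifferentiableAt ℂ (fun y : ℂ => (-y)⁻¹) x :=
        (differentiableAt_id.neg).inv hnx0
      exact ((differentiableAt_const _).mul hd1).mul
        (hd1.cpow (differentiableAt_const _) hnslit)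
    obtain ⟨hsqN, hneN⟩ := zetaN_facts hx0
    have hslitN : (1 + (9/2 * zN x) ^ 2) ∈ Complex.slitPlane := by
      rw [show (1 + (9/2 * zN x)^2 : ℂ) = 1 + 81/4 * (zN x ^ 2) by ring]
      rw [hzN]
      simp only []
      rw [hsqN]
      have h' := slit_of_not_mem hx
      exact h'
    have hFd : DifferentiableAt ℂ (fun y => -2 * FC (zN y) / y) x := by
      have := (F_diff hneN hslitN).comp x hzNd
      exact ((differentiableAt_const _).mul this).div differentiableAt_id hx0
    apply hFd.congr_of_eventuallyEq
    have hevS : ∀ᶠ y in nhds x, y ∈ SigmaSᶜ := isOpen_complS.eventually_mem hx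
    filter_upwards [hevS] with y hy
    have hy0 : y ≠ 0 := not_mem_ne_zero hy
    obtain ⟨hsqy, hney⟩ := zetaN_facts hy0
    have hsq2 : zN y ^ 2 = zetaC y ^ 2 := by
      rw [hzN]; simp only []
      rw [hsqy, zeta_sq hy0]
    have hcases : zN y = zetaC y ∨ zN y = -zetaC y := by
      have : (zN y - zetaC y) * (zN y + zetaC y) = 0 := by linear_combination hsq2
      rcases mul_eq_zero.mp this with h' | h'
      · exact Or.inl (by linear_combination h')
      · exact Or.inr (by linear_combination h')
    have hFeq : FC (zetaC y) = FC (zN y) := by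
      rcases hcases with h' | h'
      · rw [h']
      · rw [h', ← F_even (slit_zeta hy)]
    simp only [SC, hFeq]

-- ## cubic identity for S
lemma S_cubic {x : ℂ} (hx : x ∉ SigmaS) : 3 * SC x ^ 3 + 4 * x * SC x + 8 = 0 := by
  have hx0 : x ≠ 0 := not_mem_ne_zero hx
  have h := F_cubic (zeta_ne hx0) (slit_zeta hx)
  rw [zeta_sq hx0] at h
  rw [SC]
  field_simp at h ⊢
  linear_combination (-8) * h

-- ## behaviour at infinity
lemma dC_diff0 : DifferentiableAt ℂ dC 0 := by
  have hz : (1 + (9/2 * (0:ℂ)) ^ 2) ∈ Complex.slitPlane := by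
    rw [Complex.mem_slitPlane_iff]
    norm_num
  have hpoly : DifferentiableAt ℂ (fun ζ : ℂ => 1 + (9/2 * ζ) ^ 2) 0 := by fun_prop
  have hrho : DifferentiableAt ℂ (fun ζ : ℂ => rhoC (9/2 * ζ)) 0 :=
    hpoly.cpow (differentiableAt_const _) hz
  have hA : DifferentiableAt ℂ (fun ζ : ℂ => 9/2 * ζ + rhoC (9/2 * ζ)) 0 :=
    (differentiableAt_id.const_mul _).add hrho
  have hc : DifferentiableAt ℂ (fun ζ : ℂ => cC (9/2 * ζ)) 0 :=
    hA.cpow (differentiableAt_const _) (A_slit hz)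
  have := hc.sub (hc.inv (c_ne hz))
  exact this

lemma dC_zero : dC 0 = 0 := by
  have h1 : rhoC (9/2 * (0:ℂ)) = 1 := by
    rw [rhoC]
    norm_num
  have h2 : cC (9/2 * (0:ℂ)) = 1 := by
    rw [cC, h1]
    norm_num
  rw [dC, h2]
  norm_num

noncomputable def Lval : ℂ := deriv dC 0 / 3

lemma F_tendsto : Tendsto FC (nhdsWithin (0:ℂ) {(0:ℂ)}ᶜ) (nhds Lval) := by
  have h := hasDerivAt_iff_tendsto_slope.mp dC_diff0.hasDerivAt
  have h3 := h.div_const (3 : ℂ)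
  refine h3.congr' ?_
  filter_upwards [self_mem_nhdsWithin] with ζ hζ
  have hζ0 : ζ ≠ 0 := hζ
  rw [slope_def_field, dC_zero, FC]
  ring

lemma zeta_tendsto : Tendsto zetaC (cocompact ℂ) (nhdsWithin (0:ℂ) {(0:ℂ)}ᶜ) := by
  rw [tendsto_nhdsWithin_iff]
  have hnorm : Tendsto (fun x : ℂ => ‖x‖) (cocompact ℂ) atTop := tendsto_norm_cocompact_atTop
  constructor
  · apply squeeze_zero_norm' (a := fun x : ℂ => ‖x‖⁻¹)
    · filter_upwards [hnorm.eventually (eventually_ge_atTop 1)] with x hx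
      have hx0 : x ≠ 0 := by
        intro h; rw [h] at hx; simp at hx; linarith
      have h1 : ‖(x⁻¹ : ℂ) ^ ((1:ℂ)/2)‖ ≤ 1 := by
        rw [Complex.norm_cpow_of_ne_zero (inv_ne_zero hx0),
          show ((1:ℂ)/2).re = 1/2 by norm_num, show ((1:ℂ)/2).im = 0 by norm_num,
          mul_zero, Real.exp_zero, div_one]
        apply Real.rpow_le_one (by positivity) ?_ (by norm_num)
        rw [norm_inv, inv_le_one_iff₀]
        right
        linarith
      rw [zetaC, norm_mul]
      calc ‖(x⁻¹:ℂ)‖ * ‖(x⁻¹:ℂ) ^ ((1:ℂ)/2)‖ ≤ ‖(x⁻¹:ℂ)‖ * 1 := by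
            apply mul_le_mul_of_nonneg_left h1 (norm_nonneg _)
        _ = ‖x‖⁻¹ := by rw [mul_one, norm_inv]
    · exact (hnorm.inv_tendsto_atTop)
  · filter_upwards [hnorm.eventually (eventually_ge_atTop 1)] with x hx
    have hx0 : x ≠ 0 := by
      intro h; rw [h] at hx; simp at hx; linarith
    exact zeta_ne hx0

lemma g_tendsto : Tendsto (fun x => FC (zetaC x)) (cocompact ℂ) (nhds Lval) :=
  F_tendsto.comp zeta_tendsto

lemma inv_tendsto : Tendsto (fun x : ℂ => x⁻¹) (cocompact ℂ) (nhds 0) := by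
  apply squeeze_zero_norm' (a := fun x : ℂ => ‖x‖⁻¹)
  · filter_upwards with x
    rw [norm_inv]
  · exact tendsto_norm_cocompact_atTop.inv_tendsto_atTop

lemma S_tendsto : Tendsto SC (cocompact ℂ) (nhds 0) := by
  have h := (g_tendsto.const_mul (-2 : ℂ)).mul inv_tendsto
  rw [mul_zero] at h
  refine h.congr ?_
  intro x
  rw [SC, div_eq_mul_inv]

lemma S_bigO : (fun x : ℂ => SC x - (-2 / x)) =O[cocompact ℂ] fun x : ℂ => ‖x‖⁻¹ ^ 4 := by
  have hnorm : Tendsto (fun x : ℂ => ‖x‖) (cocompact ℂ) atTop := tendsto_norm_cocompact_atTop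
  have hb : ∀ᶠ x in cocompact ℂ, ‖FC (zetaC x)‖ ≤ ‖Lval‖ + 1 := by
    filter_upwards [Metric.tendsto_nhds.mp g_tendsto 1 one_pos] with x hx
    have := norm_sub_norm_le (FC (zetaC x)) Lval
    rw [dist_eq_norm] at hx
    linarith
  apply IsBigO.of_bound (6 * (‖Lval‖ + 1) ^ 3)
  filter_upwards [hb, hnorm.eventually (eventually_gt_atTop (max mR 1))] with x h1 h2
  have hmx : mR < ‖x‖ := lt_of_le_of_lt (le_max_left _ _) h2
  have h1x : 1 < ‖x‖ := lt_of_le_of_lt (le_max_right _ _) h2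
  have hxS : x ∉ SigmaS := not_mem_of_norm_gt hmx
  have hx0 : x ≠ 0 := not_mem_ne_zero hxS
  set g := FC (zetaC x) with hg
  have hcub := F_cubic (zeta_ne hx0) (slit_zeta hxS)
  rw [zeta_sq hx0, ← hg] at hcub
  have hkey : SC x - (-2 / x) = 6 * g ^ 3 * (x⁻¹) ^ 4 := by
    rw [SC, ← hg]
    field_simp at hcub ⊢
    linear_combination (-2) * hcub
  rw [hkey]
  rw [norm_mul, norm_mul, norm_pow, norm_pow, norm_inv]
  have hLn : 0 ≤ ‖Lval‖ + 1 := by positivity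
  have hgn : ‖g‖ ^ 3 ≤ (‖Lval‖ + 1) ^ 3 := by
    apply pow_le_pow_left₀ (norm_nonneg _) h1
  have hrhs : ‖(‖x‖⁻¹ ^ 4 : ℝ)‖ = ‖x‖⁻¹ ^ 4 := abs_of_nonneg (by positivity)
  rw [hrhs]
  have h6 : ‖(6:ℂ)‖ = 6 := by simp
  rw [h6]
  have hp : (0:ℝ) ≤ ‖x‖⁻¹ ^ 4 := by positivity
  calc 6 * ‖g‖ ^ 3 * ‖x‖⁻¹ ^ 4 ≤ 6 * (‖Lval‖ + 1) ^ 3 * ‖x‖⁻¹ ^ 4 := by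
        apply mul_le_mul_of_nonneg_right (by nlinarith) hp
    _ = 6 * (‖Lval‖ + 1) ^ 3 * ‖x‖⁻¹ ^ 4 := rfl

-- ## connectivity
lemma seg0_exists {e y : ℂ} (h : y ∈ segment ℝ (0:ℂ) e) :
    ∃ b : ℝ, 0 ≤ b ∧ b ≤ 1 ∧ y = (b:ℂ) * e := by
  obtain ⟨a, b, ha, hb, hab, h⟩ := h
  exact ⟨b, hb, by linarith, by rw [← h, smul_zero, zero_add, Complex.real_smul]⟩

lemma scale_not_mem {x : ℂ} (hx : x ∉ SigmaS) {c : ℝ} (hc : 1 ≤ c) :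
    (c:ℂ) * x ∉ SigmaS := by
  intro h
  apply hx
  have hc0 : 0 < c := lt_of_lt_of_le one_pos hc
  have hcC : (c:ℂ) ≠ 0 := by exact_mod_cast ne_of_gt hc0
  have sub : ∀ e, (c:ℂ) * x ∈ segment ℝ 0 e → x ∈ segment ℝ 0 e := by
    intro e he
    obtain ⟨b, hb0, hb1, hbe⟩ := seg0_exists he
    refine mem_seg0 (b/c) (by positivity) (by rw [div_le_one hc0]; linarith) ?_
    have hxe : x = (c:ℂ)⁻¹ * ((c:ℂ) * x) := by field_simp
    rw [hxe, hbe]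
    push_cast
    field_simp
  rcases h with (h | h) | h
  exacts [Or.inl (Or.inl (sub _ h)), Or.inl (Or.inr (sub _ h)), Or.inr (sub _ h)]

lemma radial_joined {y : ℂ} (hy : y ∉ SigmaS) {c : ℝ} (hc0 : 0 < c)
    (hcR : mR < c * ‖y‖) : JoinedIn SigmaSᶜ y ((c:ℂ) * y) := by
  have hy0 : y ≠ 0 := not_mem_ne_zero hy
  have hyn : 0 < ‖y‖ := norm_pos_iff.mpr hy0
  refine ⟨⟨⟨fun t => ((1 - (t:ℝ)) + (t:ℝ) * c : ℝ) • y, by fun_prop⟩, by norm_num, by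
    simp [Complex.real_smul]⟩, ?_⟩
  intro t
  simp only [Path.coe_mk_mk, Set.mem_compl_iff]
  set a : ℝ := (1 - (t:ℝ)) + (t:ℝ) * c with ha
  have ht0 : (0:ℝ) ≤ t := t.2.1
  have ht1 : (t:ℝ) ≤ 1 := t.2.2
  rcases le_total 1 c with h1c | h1c
  · -- a ≥ 1 : use star-shapedness
    have ha1 : 1 ≤ a := by nlinarith
    have := scale_not_mem hy ha1
    rwa [← Complex.real_smul] at this
  · -- a ≥ c : stay outside the ball of radius mR
    have hac : c ≤ a := by nlinarith
    have ha0 : 0 < a := lt_of_lt_of_le hc0 hac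
    apply not_mem_of_norm_gt
    rw [show a • y = (a:ℂ) * y from Complex.real_smul, norm_mul,
      Complex.norm_real, Real.norm_eq_abs, abs_of_pos ha0]
    calc mR < c * ‖y‖ := hcR
      _ ≤ a * ‖y‖ := by nlinarith

lemma isPathConnected_complS : IsPathConnected SigmaSᶜ := by
  set R : ℝ := mR + 1 with hR
  have hR0 : 0 < R := by have := mR_pos; linarith
  have hsp : IsPathConnected (Metric.sphere (0:ℂ) R) := by
    apply isPathConnected_sphere ?_ 0 (le_of_lt hR0)
    rw [Complex.rank_real_complex]
    norm_num
  have hsub : Metric.sphere (0:ℂ) R ⊆ SigmaSᶜ := by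
    intro z hz
    simp only [Metric.mem_sphere, dist_zero_right] at hz
    exact not_mem_of_norm_gt (by rw [hz]; linarith)
  obtain ⟨b, hb, hjoin⟩ := hsp
  refine ⟨b, hsub hb, ?_⟩
  intro y hy
  rw [Set.mem_compl_iff] at hy
  have hy0 : y ≠ 0 := not_mem_ne_zero hy
  have hyn : 0 < ‖y‖ := norm_pos_iff.mpr hy0
  set c : ℝ := R / ‖y‖ with hc
  have hc0 : 0 < c := div_pos hR0 hyn
  have hcy : c * ‖y‖ = R := div_mul_cancel₀ _ (ne_of_gt hyn)
  have h1 : JoinedIn SigmaSᶜ y ((c:ℂ) * y) :=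
    radial_joined hy hc0 (by rw [hcy]; linarith)
  have hmem : ((c:ℂ) * y) ∈ Metric.sphere (0:ℂ) R := by
    simp only [Metric.mem_sphere, dist_zero_right, norm_mul, Complex.norm_real,
      Real.norm_eq_abs, abs_of_pos hc0]
    exact hcy
  have h2 : JoinedIn SigmaSᶜ b ((c:ℂ) * y) := (hjoin hmem).mono hsub
  exact (h1.trans h2.symm).symm

-- ## uniqueness
lemma eventually_cocompact_norm_gt (hP : ∀ᶠ x : ℂ in cocompact ℂ, True → True) : True := trivial

lemma S_analyticOnNhd : AnalyticOnNhd ℂ SC SigmaSᶜ := by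
  apply DifferentiableOn.analyticOnNhd ?_ isOpen_complS
  intro x hx
  exact (S_diff hx).differentiableWithinAt

lemma uniqueness {S' : ℂ → ℂ}
    (hA : AnalyticOnNhd ℂ S' SigmaSᶜ)
    (hC : ∀ x ∈ SigmaSᶜ, 3 * S' x ^ 3 + 4 * x * S' x + 8 = 0)
    (hT : Tendsto S' (cocompact ℂ) (nhds 0)) :
    Set.EqOn S' SC SigmaSᶜ := by
  have hnorm : Tendsto (fun x : ℂ => ‖x‖) (cocompact ℂ) atTop := tendsto_norm_cocompact_atTop
  -- eventually both are small and we are outside SigmaS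
  have hev : ∀ᶠ x : ℂ in cocompact ℂ,
      ‖S' x‖ ≤ 1 ∧ ‖SC x‖ ≤ 1 ∧ mR < ‖x‖ ∧ 9 < 4 * ‖x‖ := by
    have h1 := Metric.tendsto_nhds.mp hT 1 one_pos
    have h2 := Metric.tendsto_nhds.mp S_tendsto 1 one_pos
    filter_upwards [h1, h2, hnorm.eventually (eventually_gt_atTop (max mR (9/4)))]
      with x hx1 hx2 hx3
    rw [dist_zero_right] at hx1 hx2
    refine ⟨le_of_lt hx1, le_of_lt hx2, lt_of_le_of_lt (le_max_left _ _) hx3, ?_⟩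
    have := lt_of_le_of_lt (le_max_right mR (9/4)) hx3
    linarith
  -- extract a concrete exterior region
  obtain ⟨K, hK, hKP⟩ := (Filter.hasBasis_cocompact.eventually_iff).mp hev
  obtain ⟨r, hr⟩ := hK.isBounded.subset_closedBall 0
  set R : ℝ := max r mR + 1 with hRdef
  have hRm : mR < R := by
    have := le_max_right r mR
    linarith
  have hsubset : {z : ℂ | R < ‖z‖} ⊆ SigmaSᶜ := by
    intro z hz
    exact not_mem_of_norm_gt (lt_trans hRm hz)
  have hgood : ∀ z : ℂ, R < ‖z‖ → S' z = SC z := by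
    intro z hz
    have hzK : z ∉ K := by
      intro hzK
      have := hr hzK
      simp only [Metric.mem_closedBall, dist_zero_right] at this
      have : r ≤ max r mR := le_max_left _ _
      linarith [le_max_left r mR, hr hzK, (Metric.mem_closedBall.mp (hr hzK))]
    have hzKc : z ∈ Kᶜ := hzK
    obtain ⟨hS'1, hS1, hmz, h9z⟩ := hKP hzKc
    have hzS : z ∉ SigmaS := not_mem_of_norm_gt hmz
    have e1 := hC z hzS
    have e2 := S_cubic hzS
    have hfac : (S' z - SC z) * (3 * (S' z ^ 2 + S' z * SC z + SC z ^ 2) + 4 * z) = 0 := by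
      linear_combination e1 - e2
    rcases mul_eq_zero.mp hfac with h | h
    · exact sub_eq_zero.mp h
    · exfalso
      have hb : ‖3 * (S' z ^ 2 + S' z * SC z + SC z ^ 2)‖ ≤ 9 := by
        rw [norm_mul]
        have : ‖S' z ^ 2 + S' z * SC z + SC z ^ 2‖ ≤ 3 := by
          calc ‖S' z ^ 2 + S' z * SC z + SC z ^ 2‖
              ≤ ‖S' z ^ 2 + S' z * SC z‖ + ‖SC z ^ 2‖ := norm_add_le _ _
            _ ≤ ‖S' z ^ 2‖ + ‖S' z * SC z‖ + ‖SC z ^ 2‖ := by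
                have := norm_add_le (S' z ^ 2) (S' z * SC z)
                linarith
            _ ≤ 1 + 1 + 1 := by
                rw [norm_pow, norm_pow, norm_mul]
                have h1 : ‖S' z‖ ^ 2 ≤ 1 := by nlinarith [norm_nonneg (S' z)]
                have h2 : ‖SC z‖ ^ 2 ≤ 1 := by nlinarith [norm_nonneg (SC z)]
                have h3 : ‖S' z‖ * ‖SC z‖ ≤ 1 := by nlinarith [norm_nonneg (S' z), norm_nonneg (SC z)]
                linarith
            _ = 3 := by norm_num
        have h3 : ‖(3:ℂ)‖ = 3 := by simp
        rw [h3]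
        linarith
      have h4z : ‖4 * z‖ = 4 * ‖z‖ := by
        rw [norm_mul]
        simp
      have : 4 * z = (3 * (S' z ^ 2 + S' z * SC z + SC z ^ 2) + 4 * z) -
          3 * (S' z ^ 2 + S' z * SC z + SC z ^ 2) := by ring
      have hcontra : ‖4 * z‖ ≤ 9 := by
        rw [this, h]
        simpa using hb
      rw [h4z] at hcontra
      linarith
  -- identity theorem
  have hR0 : 0 < R := by
    have := mR_pos
    have := le_max_right r mR
    linarith
  have hz₀ : ((R + 1 : ℝ) : ℂ) ∈ SigmaSᶜ := by
    apply hsubset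
    simp only [Set.mem_setOf_eq, Complex.norm_real, Real.norm_eq_abs]
    rw [abs_of_pos (by linarith)]
    linarith
  apply hA.eqOn_of_preconnected_of_eventuallyEq S_analyticOnNhd
    isPathConnected_complS.isConnected.isPreconnected hz₀
  have hopen : IsOpen {z : ℂ | R < ‖z‖} := isOpen_lt continuous_const continuous_norm
  have hmem : ((R + 1 : ℝ) : ℂ) ∈ {z : ℂ | R < ‖z‖} := by
    simp only [Set.mem_setOf_eq, Complex.norm_real, Real.norm_eq_abs]
    rw [abs_of_pos (by linarith)]
    linarith
  filter_upwards [hopen.eventually_mem hmem] with z hz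
  exact hgood z hz

end Aux

/-- There is a unique function `S`, analytic on `ℂ ∖ Σ_S`, satisfying the cubic
`3S(x)³ + 4xS(x) + 8 = 0` there and `S(x) → 0` as `x → ∞`; moreover it satisfies
`S(x) = −2/x + O(|x|⁻⁴)` as `x → ∞`. -/
theorem cubic_branch_S_exists_unique :
    ∃ S : ℂ → ℂ,
      (AnalyticOnNhd ℂ S SigmaSᶜ ∧
        (∀ x ∈ SigmaSᶜ, 3 * S x ^ 3 + 4 * x * S x + 8 = 0) ∧
        Tendsto S (cocompact ℂ) (nhds 0)) ∧
      ((fun x : ℂ => S x - (-2 / x)) =O[cocompact ℂ] fun x : ℂ => ‖x‖⁻¹ ^ 4) ∧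
      (∀ S' : ℂ → ℂ,
        (AnalyticOnNhd ℂ S' SigmaSᶜ ∧
          (∀ x ∈ SigmaSᶜ, 3 * S' x ^ 3 + 4 * x * S' x + 8 = 0) ∧
          Tendsto S' (cocompact ℂ) (nhds 0)) →
        Set.EqOn S' S SigmaSᶜ) := by
  refine ⟨SC, ⟨S_analyticOnNhd, fun x hx => S_cubic hx, S_tendsto⟩, S_bigO, ?_⟩
  rintro S' ⟨hA, hC, hT⟩
  exact uniqueness hA (fun x hx => hC x hx) hT
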